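/- Let π = UjiV cover π′ = UijV in the weak order (i < j, and π, π′ differ by exchanging the adjacent entries i and j of their one-line notations), and suppose π is a linear extension of an acyclic reduced pipe dream P ∈ Π(ω). Then: if the contact graph P♯ has no arc j → i, then π′ is also a linear extension of P; otherwise, π′ is a linear extension of the pipe dream P′ obtained from P by flipping the furthest-northeast contact between pipes i and j in P. -/

import Mathlib

/-- A pipe dream of size `n` on the triangular shape, with boxes indexed by pairs
`(r, c)` of a row `r` and a column `c`, both `0`-indexed (rows increase southwards,
columns increase eastwards).  `cross r c = true` means that box `(r, c)` contains a
crossing tile; all other boxes contain elbow tiles.  Crossings are only allowed in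
the full boxes of the triangular shape, i.e. those with `r + c + 2 ≤ n` (the boxes
with `r + c + 1 = n` are the half-boxes on the antidiagonal, which are forced
elbows).  The `n` pipes enter horizontally on the left side in rows `0, …, n-1` and
exit vertically on the top side in columns `0, …, n-1`; pipe `k` is the pipe
entering at row `k`.  An elbow tile connects the west edge of its box to the north
edge (the pipe travelling through this elbow passes northwest of the tile) and the
south edge to the east edge (this pipe passes southeast of the tile); a crossing
tile connects west to east and south to north. -/
structure PipeDream (n : ℕ) where
  cross : ℕ → ℕ → Bool
  inShape : ∀ r c : ℕ, cross r c = true → r + c + 2 ≤ n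

namespace PipeDream

variable {n : ℕ}

/-- `(P.pipes r c).1` is the label of the pipe entering box `(r, c)` from the west,
and `(P.pipes r c).2` is the label of the pipe entering box `(r, c)` from the south
(junk value `0` if there is no box below box `(r, c)` in the triangular shape). -/
def pipes (P : PipeDream n) : ℕ → ℕ → ℕ × ℕ
  | r, c =>
    (if hc : c = 0 then r
      else if P.cross r (c - 1) then (pipes P r (c - 1)).1 else (pipes P r (c - 1)).2,
     if hr : r + c + 2 ≤ n then
        if P.cross (r + 1) c then (pipes P (r + 1) c).2 else (pipes P (r + 1) c).1
      else 0)
  termination_by r c => (n - r) + c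
  decreasing_by all_goals omega

/-- The pipe entering box `(r, c)` from the west (travelling eastwards). -/
def west (P : PipeDream n) (r c : ℕ) : ℕ := (pipes P r c).1

/-- The pipe entering box `(r, c)` from the south (travelling northwards). -/
def south (P : PipeDream n) (r c : ℕ) : ℕ := (pipes P r c).2

/-- The pipe exiting on the top side at column `c`. -/
def exitPipe (P : PipeDream n) (c : ℕ) : ℕ :=
  if P.cross 0 c then P.south 0 c else P.west 0 c

/-- `P` has exit permutation `ω`, i.e. the pipe exiting at column `c` is `ω c`;
equivalently, pipe `k` exits at column `ω⁻¹ k`. -/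
def HasExitPerm (P : PipeDream n) (ω : Equiv.Perm (Fin n)) : Prop :=
  ∀ c : Fin n, P.exitPipe c.val = (ω c).val

/-- `P` is reduced: any two of its pipes cross at most once. -/
def Reduced (P : PipeDream n) : Prop :=
  ∀ r c r' c' : ℕ, P.cross r c = true → P.cross r' c' = true → (r, c) ≠ (r', c') →
    ¬ ((P.west r c = P.west r' c' ∧ P.south r c = P.south r' c') ∨
        (P.west r c = P.south r' c' ∧ P.south r c = P.west r' c'))

/-- The arcs of the contact graph `P♯` of `P`: there is one arc for each elbow
contact of `P` (an elbow tile in a full box of the triangular shape), oriented from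
the pipe passing northwest of the contact (the one travelling west-to-north) to the
pipe passing southeast of it (the one travelling south-to-east). -/
def Arc (P : PipeDream n) (i j : ℕ) : Prop :=
  ∃ r c : ℕ, r + c + 2 ≤ n ∧ P.cross r c = false ∧ P.west r c = i ∧ P.south r c = j

/-- `P` is acyclic: its contact graph has no directed cycle. -/
def Acyclic (P : PipeDream n) : Prop := ∀ i : ℕ, ¬ Relation.TransGen P.Arc i i

/-- `i ⪯_P j` : there is a directed path (possibly empty) from `i` to `j` in the
contact graph of `P`. -/
def Path (P : PipeDream n) (i j : ℕ) : Prop := Relation.ReflTransGen P.Arc i j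

/-- `π` is a linear extension of `P` : `π⁻¹ i < π⁻¹ j` for every arc `i → j` of the
contact graph of `P`. -/
def LinExt (P : PipeDream n) (π : Equiv.Perm (Fin n)) : Prop :=
  ∀ i j : Fin n, P.Arc i.val j.val → π⁻¹ i < π⁻¹ j

/-- There is a contact (an elbow tile in a full box) between pipes `i` and `j`
at box `b`. -/
def ContactAt (P : PipeDream n) (i j : ℕ) (b : ℕ × ℕ) : Prop :=
  b.1 + b.2 + 2 ≤ n ∧ P.cross b.1 b.2 = false ∧
    ((P.west b.1 b.2 = i ∧ P.south b.1 b.2 = j) ∨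
      (P.west b.1 b.2 = j ∧ P.south b.1 b.2 = i))

/-- `P'` is obtained from `P` by the flip exchanging the contact at box `b` with the
crossing at box `b'` (a contact and a crossing between the same two pipes). -/
def IsFlip (P P' : PipeDream n) (b b' : ℕ × ℕ) : Prop :=
  b ≠ b' ∧
  P.cross b.1 b.2 = false ∧ P.cross b'.1 b'.2 = true ∧
  P'.cross b.1 b.2 = true ∧ P'.cross b'.1 b'.2 = false ∧
  (∀ r c : ℕ, (r, c) ≠ b → (r, c) ≠ b' → P.cross r c = P'.cross r c) ∧
  ((P.west b.1 b.2 = P.west b'.1 b'.2 ∧ P.south b.1 b.2 = P.south b'.1 b'.2) ∨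
    (P.west b.1 b.2 = P.south b'.1 b'.2 ∧ P.south b.1 b.2 = P.west b'.1 b'.2))

/-- There is an increasing flip from `P` to `P'`: a flip exchanging a contact at a
box `b` weakly southwest of the box `b'` of the corresponding crossing. -/
def IncFlip (P P' : PipeDream n) : Prop :=
  ∃ b b' : ℕ × ℕ, P.IsFlip P' b b' ∧ b'.1 ≤ b.1 ∧ b.2 ≤ b'.2

theorem pipes_eq (P : PipeDream n) (r c : ℕ) : P.pipes r c =
    (if c = 0 then r else if P.cross r (c - 1) then (P.pipes r (c - 1)).1 else (P.pipes r (c - 1)).2,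
     if r + c + 2 ≤ n then
        (if P.cross (r + 1) c then (P.pipes (r + 1) c).2 else (P.pipes (r + 1) c).1)
      else 0) := by
  conv_lhs => rw [pipes]
  rw [dite_eq_ite, dite_eq_ite]

theorem west_zero (P : PipeDream n) (r : ℕ) : P.west r 0 = r := by
  rw [west, pipes_eq]; simp

theorem west_succ (P : PipeDream n) (r c : ℕ) :
    P.west r (c+1) = if P.cross r c then P.west r c else P.south r c := by
  rw [west, pipes_eq]; simp [west, south]

theorem south_lt (P : PipeDream n) (r c : ℕ) (h : r + c + 2 ≤ n) :
    P.south r c = if P.cross (r+1) c then P.south (r+1) c else P.west (r+1) c := by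
  rw [south, pipes_eq]; simp [west, south, h]

theorem south_ge (P : PipeDream n) (r c : ℕ) (h : ¬ (r + c + 2 ≤ n)) :
    P.south r c = 0 := by
  rw [south, pipes_eq]; simp [h]

theorem lbounds (P : PipeDream n) : ∀ m r c : ℕ, c + (n - r) ≤ m →
    (r + c + 1 ≤ n → r ≤ P.west r c) ∧ (r + c + 2 ≤ n → r < P.south r c) := by
  intro m
  induction m with
  | zero => intro r c hm; constructor <;> intro h <;> omega
  | succ m ih =>
    intro r c hm
    constructor
    · intro h
      cases c with
      | zero => rw [west_zero]
      | succ c₁ =>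
        rw [west_succ]
        by_cases hc : P.cross r c₁ = true
        · rw [if_pos hc]; exact (ih r c₁ (by omega)).1 (by omega)
        · rw [if_neg hc]; have := (ih r c₁ (by omega)).2 (by omega); omega
    · intro h
      rw [south_lt _ _ _ h]
      by_cases hc : P.cross (r+1) c = true
      · rw [if_pos hc]
        have h2 := P.inShape _ _ hc
        have := (ih (r+1) c (by omega)).2 (by omega); omega
      · rw [if_neg hc]
        have := (ih (r+1) c (by omega)).1 (by omega); omega

theorem west_ge (P : PipeDream n) (r c : ℕ) (hv : r + c + 1 ≤ n) : r ≤ P.west r c :=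
  (lbounds P (c + n) r c (by omega)).1 hv

theorem south_gt (P : PipeDream n) (r c : ℕ) (hv : r + c + 2 ≤ n) : r < P.south r c :=
  (lbounds P (c + n) r c (by omega)).2 hv

theorem pipes_congr (P P' : PipeDream n) : ∀ m r c : ℕ, c + (n - r) ≤ m →
    (∀ r' c', r ≤ r' → c' ≤ c → ¬(r' = r ∧ c' = c) → P.cross r' c' = P'.cross r' c') →
    P.pipes r c = P'.pipes r c := by
  intro m
  induction m with
  | zero =>
    intro r c hm h
    have hc : c = 0 := by omega
    have hr : ¬ (r + c + 2 ≤ n) := by omega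
    subst hc
    rw [pipes_eq P, pipes_eq P']
    simp [hr]
  | succ m ih =>
    intro r c hm h
    rw [pipes_eq P r c, pipes_eq P' r c]
    have e1 : (if c = 0 then (r:ℕ) else if P.cross r (c-1) then (P.pipes r (c-1)).1 else (P.pipes r (c-1)).2)
        = (if c = 0 then (r:ℕ) else if P'.cross r (c-1) then (P'.pipes r (c-1)).1 else (P'.pipes r (c-1)).2) := by
      cases c with
      | zero => simp
      | succ c₁ =>
        simp only [Nat.succ_ne_zero, if_neg, Nat.add_sub_cancel]
        rw [h r c₁ le_rfl (by omega) (by omega),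
          ih r c₁ (by omega) (fun r' c' h1 h2 h3 => h r' c' h1 (by omega) (by omega))]
    have e2 : (if r + c + 2 ≤ n then (if P.cross (r+1) c then (P.pipes (r+1) c).2 else (P.pipes (r+1) c).1) else 0)
        = (if r + c + 2 ≤ n then (if P'.cross (r+1) c then (P'.pipes (r+1) c).2 else (P'.pipes (r+1) c).1) else 0) := by
      by_cases hs : r + c + 2 ≤ n
      · rw [if_pos hs, if_pos hs,
          h (r+1) c (by omega) le_rfl (by omega),
          ih (r+1) c (by omega) (fun r' c' h1 h2 h3 => h r' c' (by omega) h2 (by omega))]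
      · rw [if_neg hs, if_neg hs]
    rw [e1, e2]

/-- source of a non-fresh edge: the edge one step back along its pipe. -/
theorem src_spec (P : PipeDream n) (r c : ℕ) (s : Bool)
    (hv : r + c + cond s 2 1 ≤ n) (hnf : s = false → c ≠ 0) :
    ∃ a d t, (s = true → a = r + 1 ∧ d = c) ∧ (s = false → a = r ∧ d + 1 = c) ∧
      t = (if P.cross a d then s else !s) ∧
      a + d + cond t 2 1 ≤ n ∧
      cond t (P.south a d) (P.west a d) = cond s (P.south r c) (P.west r c) := by
  cases s with
  | false =>
    obtain ⟨c₁, rfl⟩ : ∃ c₁, c = c₁ + 1 := ⟨c - 1, by have := hnf rfl; omega⟩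
    simp only [Bool.cond_false, Bool.cond_true] at hv ⊢
    refine ⟨r, c₁, if P.cross r c₁ then false else true, by simp, fun _ => ⟨rfl, rfl⟩, by simp, ?_, ?_⟩
    · by_cases hc : P.cross r c₁ = true <;> simp [hc] <;> omega
    · rw [west_succ]
      by_cases hc : P.cross r c₁ = true <;> simp [hc]
  | true =>
    simp only [Bool.cond_false, Bool.cond_true] at hv ⊢
    refine ⟨r + 1, c, if P.cross (r+1) c then true else false, fun _ => ⟨rfl, rfl⟩, by simp, by simp, ?_, ?_⟩
    · by_cases hc : P.cross (r+1) c = true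
      · have := P.inShape _ _ hc; simp [hc]; omega
      · simp [hc]; omega
    · rw [south_lt _ _ _ hv]
      by_cases hc : P.cross (r+1) c = true <;> simp [hc]


/-- Each label appears on at most one edge of each diagonal cut. -/
theorem label_unique (P : PipeDream n) : ∀ m (r c : ℕ) (s : Bool) (r' c' : ℕ) (s' : Bool),
    c + (n - r) ≤ m →
    r + c + cond s 2 1 ≤ n → r' + c' + cond s' 2 1 ≤ n →
    cond s (P.south r c) (P.west r c) = cond s' (P.south r' c') (P.west r' c') →
    c + r' = c' + r →
    r = r' ∧ c = c' ∧ s = s' := by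
  intro m
  induction m with
  | zero =>
    intro r c s r' c' s' hm hv hv' hl hcut
    exfalso
    cases s <;> simp at hv <;> omega
  | succ m ih =>
    intro r c s r' c' s' hm hv hv' hl hcut
    by_cases hf1 : s = false ∧ c = 0
    · obtain ⟨rfl, rfl⟩ := hf1
      simp only [Bool.cond_false] at hl
      rw [west_zero] at hl
      cases s' with
      | false =>
        simp only [Bool.cond_false] at hl
        by_cases hc' : c' = 0
        · subst hc'
          rw [west_zero] at hl
          exact ⟨hl, rfl, rfl⟩
        · exfalso
          have := west_ge P r' c' (by simpa using hv')
          omega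
      | true =>
        exfalso
        simp only [Bool.cond_true] at hl
        have := south_gt P r' c' (by simpa using hv')
        omega
    · by_cases hf2 : s' = false ∧ c' = 0
      · exfalso
        obtain ⟨rfl, rfl⟩ := hf2
        simp only [Bool.cond_false] at hl
        rw [west_zero] at hl
        cases s with
        | false =>
          simp only [Bool.cond_false] at hl
          have hc0 : c ≠ 0 := fun hc => hf1 ⟨rfl, hc⟩
          have := west_ge P r c (by simpa using hv)
          omega
        | true =>
          simp only [Bool.cond_true] at hl
          have := south_gt P r c (by simpa using hv)
          omega
      · have hnf1 : s = false → c ≠ 0 := fun hs hc => hf1 ⟨hs, hc⟩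
        have hnf2 : s' = false → c' ≠ 0 := fun hs hc => hf2 ⟨hs, hc⟩
        obtain ⟨a, d, t, ht1, ht0, htdef, hvt, hlt⟩ := src_spec P r c s hv hnf1
        obtain ⟨a', d', t', ht1', ht0', htdef', hvt', hlt'⟩ := src_spec P r' c' s' hv' hnf2
        have es : (s = true ∧ a = r + 1 ∧ d = c ∧ r + c + 2 ≤ n) ∨
            (s = false ∧ a = r ∧ d + 1 = c ∧ r + c + 1 ≤ n ∧ c ≠ 0) := by
          cases s with
          | true => exact Or.inl ⟨rfl, (ht1 rfl).1, (ht1 rfl).2, by simpa using hv⟩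
          | false => exact Or.inr ⟨rfl, (ht0 rfl).1, (ht0 rfl).2, by simpa using hv, hnf1 rfl⟩
        have es' : (s' = true ∧ a' = r' + 1 ∧ d' = c' ∧ r' + c' + 2 ≤ n) ∨
            (s' = false ∧ a' = r' ∧ d' + 1 = c' ∧ r' + c' + 1 ≤ n ∧ c' ≠ 0) := by
          cases s' with
          | true => exact Or.inl ⟨rfl, (ht1' rfl).1, (ht1' rfl).2, by simpa using hv'⟩
          | false => exact Or.inr ⟨rfl, (ht0' rfl).1, (ht0' rfl).2, by simpa using hv', hnf2 rfl⟩
        have fuel : d + (n - a) ≤ m := by rcases es with ⟨_, h1, h2, h3⟩ | ⟨_, h1, h2, h3, h4⟩ <;> omega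
        have hcut2 : d + a' = d' + a := by
          rcases es with ⟨_, h1, h2, h3⟩ | ⟨_, h1, h2, h3, h4⟩ <;>
            rcases es' with ⟨_, g1, g2, g3⟩ | ⟨_, g1, g2, g3, g4⟩ <;> omega
        obtain ⟨ha, hd, ht⟩ := ih a d t a' d' t' fuel hvt hvt'
          (hlt.trans (hl.trans hlt'.symm)) hcut2
        subst ha; subst hd
        have hss : s = s' := by
          rw [htdef, htdef'] at ht
          by_cases hc : P.cross a d = true <;> simp [hc] at ht <;> exact ht
        subst hss
        rcases es with ⟨hs, h1, h2, h3⟩ | ⟨hs, h1, h2, h3, h4⟩ <;>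
          rcases es' with ⟨hs', g1, g2, g3⟩ | ⟨hs', g1, g2, g3, g4⟩
        · exact ⟨by omega, by omega, rfl⟩
        · rw [hs] at hs'; exact absurd hs' (by simp)
        · rw [hs] at hs'; exact absurd hs' (by simp)
        · exact ⟨by omega, by omega, rfl⟩


/-- If pipes `i < j` appear inverted (i below j) on some diagonal cut, they
crossed strictly earlier. -/
theorem inversion_crossing (P : PipeDream n) {i j : ℕ} (hij : i < j) :
    ∀ m (r c : ℕ) (s : Bool) (r' c' : ℕ) (s' : Bool),
    c + (n - r) ≤ m →
    r + c + cond s 2 1 ≤ n → r' + c' + cond s' 2 1 ≤ n →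
    cond s (P.south r c) (P.west r c) = i →
    cond s' (P.south r' c') (P.west r' c') = j →
    c + r' = c' + r →
    2 * r' + cond s' 1 0 < 2 * r + cond s 1 0 →
    ∃ u v, P.cross u v = true ∧
      ((P.west u v = i ∧ P.south u v = j) ∨ (P.west u v = j ∧ P.south u v = i)) ∧
      v + (n - u) < c + (n - r) := by
  intro m
  induction m with
  | zero =>
    intro r c s r' c' s' hm hv hv' hli hlj hcut hpos
    exfalso; cases s <;> simp at hv <;> omega
  | succ m ih =>
    intro r c s r' c' s' hm hv hv' hli hlj hcut hpos
    by_cases hf1 : s = false ∧ c = 0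
    · exfalso
      obtain ⟨rfl, rfl⟩ := hf1
      simp only [Bool.cond_false] at hli hpos
      rw [west_zero] at hli
      have hb : cond s' (1:ℕ) 0 ≤ 1 := by cases s' <;> simp
      omega
    · by_cases hf2 : s' = false ∧ c' = 0
      · exfalso
        obtain ⟨rfl, rfl⟩ := hf2
        simp only [Bool.cond_false] at hlj hpos
        rw [west_zero] at hlj
        cases s with
        | true =>
          simp only [Bool.cond_true] at hli hpos
          have := south_gt P r c (by simpa using hv)
          omega
        | false =>
          simp only [Bool.cond_false] at hli hpos
          have hc0 : c ≠ 0 := fun hc => hf1 ⟨rfl, hc⟩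
          have := west_ge P r c (by simpa using hv)
          omega
      · have hnf1 : s = false → c ≠ 0 := fun hs hc => hf1 ⟨hs, hc⟩
        have hnf2 : s' = false → c' ≠ 0 := fun hs hc => hf2 ⟨hs, hc⟩
        obtain ⟨a, d, t, ht1, ht0, htdef, hvt, hlt⟩ := src_spec P r c s hv hnf1
        obtain ⟨a', d', t', ht1', ht0', htdef', hvt', hlt'⟩ := src_spec P r' c' s' hv' hnf2
        have hbi : cond t (1:ℕ) 0 ≤ 1 := by cases t <;> simp
        have hbj : cond t' (1:ℕ) 0 ≤ 1 := by cases t' <;> simp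
        have hi : cond t (P.south a d) (P.west a d) = i := hlt.trans hli
        have hj : cond t' (P.south a' d') (P.west a' d') = j := hlt'.trans hlj
        cases s with
        | false =>
          obtain ⟨ha, hd⟩ := ht0 rfl
          have hv1 : r + c + 1 ≤ n := by simpa using hv
          simp only [Bool.cond_false] at hpos
          cases s' with
          | false =>
            -- both west edges; same box impossible (i = j), so a' < a
            obtain ⟨ha', hd'⟩ := ht0' rfl
            have hv1' : r' + c' + 1 ≤ n := by simpa using hv'
            simp only [Bool.cond_false] at hpos hli hlj
            have hne : a' < a := by
              rcases Nat.lt_or_ge a' a with h | h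
              · exact h
              · exfalso
                have : a = a' := by omega
                have : r = r' := by omega
                have : c = c' := by omega
                subst_vars; omega
            obtain ⟨u, v, h1, h2, h3⟩ := ih a d t a' d' t' (by omega) hvt hvt' hi hj
              (by omega) (by omega)
            exact ⟨u, v, h1, h2, by omega⟩
          | true =>
            obtain ⟨ha', hd'⟩ := ht1' rfl
            have hv2' : r' + c' + 2 ≤ n := by simpa using hv'
            simp only [Bool.cond_false, Bool.cond_true] at hpos hli hlj
            by_cases hbox : a = a' ∧ d = d'
            · -- same box: the key case
              obtain ⟨hba, hbd⟩ := hbox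
              rw [← hba, ← hbd] at hj htdef'
              by_cases hcr : P.cross a d = true
              · rw [htdef, if_pos hcr] at hi
                rw [htdef', if_pos hcr] at hj
                simp only [Bool.cond_false, Bool.cond_true] at hi hj
                exact ⟨a, d, hcr, Or.inl ⟨hi, hj⟩, by omega⟩
              · rw [htdef, if_neg hcr] at hi
                rw [htdef', if_neg hcr] at hj
                simp only [Bool.not_false, Bool.not_true, Bool.cond_false, Bool.cond_true] at hi hj
                have htt : t = true := by rw [htdef, if_neg hcr]; simp
                have htt' : t' = false := by rw [htdef', if_neg hcr]; simp
                rw [htt] at hvt; rw [htt'] at hvt'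
                obtain ⟨u, v, h1, h2, h3⟩ := ih a d true a d false (by omega)
                  (by simpa using hvt) (by simp at hvt' ⊢; omega)
                  (by simpa using hi) (by simpa using hj) (by omega) (by simp)
                exact ⟨u, v, h1, h2, by omega⟩
            · have hne : a' < a := by
                rcases Nat.lt_or_ge a' a with h | h
                · exact h
                · exfalso; exact hbox ⟨by omega, by omega⟩
              obtain ⟨u, v, h1, h2, h3⟩ := ih a d t a' d' t' (by omega) hvt hvt' hi hj
                (by omega) (by omega)
              exact ⟨u, v, h1, h2, by omega⟩
        | true =>
          obtain ⟨ha, hd⟩ := ht1 rfl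
          have hv2 : r + c + 2 ≤ n := by simpa using hv
          simp only [Bool.cond_true] at hpos hli
          cases s' with
          | false =>
            obtain ⟨ha', hd'⟩ := ht0' rfl
            have hv1' : r' + c' + 1 ≤ n := by simpa using hv'
            simp only [Bool.cond_false] at hpos hlj
            have hne : a' < a := by omega
            obtain ⟨u, v, h1, h2, h3⟩ := ih a d t a' d' t' (by omega) hvt hvt' hi hj
              (by omega) (by omega)
            exact ⟨u, v, h1, h2, by omega⟩
          | true =>
            obtain ⟨ha', hd'⟩ := ht1' rfl
            have hv2' : r' + c' + 2 ≤ n := by simpa using hv'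
            simp only [Bool.cond_true] at hpos hli hlj
            have hne : a' < a := by
              rcases Nat.lt_or_ge a' a with h | h
              · exact h
              · exfalso
                have : r = r' := by omega
                have : c = c' := by omega
                subst_vars; omega
            obtain ⟨u, v, h1, h2, h3⟩ := ih a d t a' d' t' (by omega) hvt hvt' hi hj
              (by omega) (by omega)
            exact ⟨u, v, h1, h2, by omega⟩


/-- Label-relabeling function: swaps `x` and `y` on cuts strictly after `κ0`. -/
def fswap (x y κ0 k d : ℕ) : ℕ :=
  if (k = x ∨ k = y) ∧ κ0 < d then (if k = x then y else x) else k

theorem fswap_succ (x y κ0 k d : ℕ) (h : (k = x ∨ k = y) → κ0 ≠ d) :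
    fswap x y κ0 k (d + 1) = fswap x y κ0 k d := by
  unfold fswap
  split_ifs <;> first | rfl | omega

theorem fswap_invol (x y κ0 k d : ℕ) :
    fswap x y κ0 (fswap x y κ0 k d) d = k := by
  unfold fswap
  split_ifs <;> omega


theorem fswap_stay (x y κ0 k d : ℕ) (h : ¬ κ0 < d) : fswap x y κ0 k d = k := by
  unfold fswap; split_ifs <;> omega

theorem fswap_out (x y κ0 k d : ℕ) (h1 : k ≠ x) (h2 : k ≠ y) : fswap x y κ0 k d = k := by
  unfold fswap; split_ifs <;> omega

theorem fswap_first (x y κ0 k d : ℕ) (hk : k = x) (hxy : x ≠ y) (h : κ0 < d) :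
    fswap x y κ0 k d = y := by
  unfold fswap; split_ifs <;> omega

theorem fswap_second (x y κ0 k d : ℕ) (hk : k = y) (hxy : x ≠ y) (h : κ0 < d) :
    fswap x y κ0 k d = x := by
  unfold fswap; split_ifs <;> omega

theorem fswap_mem (x y κ0 k d : ℕ) (hk : k = x ∨ k = y) :
    fswap x y κ0 k d = x ∨ fswap x y κ0 k d = y := by
  unfold fswap; split_ifs <;> omega

/-- Flipping a single crossing `e` into an elbow swaps the two pipes through `e`
on all later cuts. -/
theorem swap_lemma (P Q : PipeDream n) (e1 e2 x y : ℕ)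
    (hPe : P.cross e1 e2 = true) (hQe : Q.cross e1 e2 = false)
    (hagree : ∀ r c : ℕ, ¬(r = e1 ∧ c = e2) → Q.cross r c = P.cross r c)
    (hx : P.west e1 e2 = x) (hy : P.south e1 e2 = y) (hxy : x ≠ y) :
    ∀ m r c : ℕ, c + (n - r) ≤ m →
    (r + c + 1 ≤ n → Q.west r c = fswap x y (e2 + (n - e1)) (P.west r c) (c + (n - r))) ∧
    (r + c + 2 ≤ n → Q.south r c = fswap x y (e2 + (n - e1)) (P.south r c) (c + (n - r))) := by
  have hesh : e1 + e2 + 2 ≤ n := P.inShape _ _ hPe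
  have hQPe : Q.pipes e1 e2 = P.pipes e1 e2 :=
    pipes_congr Q P (e2 + n) e1 e2 (by omega) (fun r' c' h1 h2 h3 => hagree r' c' (by omega))
  have hQx : Q.west e1 e2 = x := by rw [west, hQPe]; exact hx
  have hQy : Q.south e1 e2 = y := by rw [south, hQPe]; exact hy
  have hex : e1 ≤ x := hx ▸ west_ge P e1 e2 (by omega)
  have hey : e1 < y := hy ▸ south_gt P e1 e2 hesh
  intro m
  induction m with
  | zero => intro r c hm; constructor <;> intro h <;> exfalso <;> omega
  | succ m ih =>
    intro r c hm
    constructor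
    · intro hv
      cases c with
      | zero =>
        rw [west_zero, west_zero, fswap, if_neg]
        rintro ⟨hk, hlt⟩
        rcases hk with hk | hk <;> omega
      | succ c₁ =>
        by_cases hbe : r = e1 ∧ c₁ = e2
        · obtain ⟨rfl, rfl⟩ := hbe
          rw [west_succ, west_succ, hPe, hQe, if_pos rfl, if_neg (by simp), hx, hQy,
            fswap, if_pos ⟨Or.inl rfl, by omega⟩, if_pos rfl]
        · rw [west_succ, west_succ, hagree r c₁ hbe]
          have hkeyW : (P.west r c₁ = x ∨ P.west r c₁ = y) → e2 + (n - e1) ≠ c₁ + (n - r) := by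
            intro hk hcuteq
            have hcut2 : c₁ + e1 = e2 + r := by omega
            rcases hk with hk | hk
            · obtain ⟨h1, h2, h3⟩ := label_unique P (c₁ + n) r c₁ false e1 e2 false (by omega)
                (by simp; omega) (by simp; omega)
                (by simp only [Bool.cond_false]; rw [hk, hx]) hcut2
              exact hbe ⟨h1, h2⟩
            · obtain ⟨h1, h2, h3⟩ := label_unique P (c₁ + n) r c₁ false e1 e2 true (by omega)
                (by simp; omega) (by simp; omega)
                (by simp only [Bool.cond_false, Bool.cond_true]; rw [hk, hy]) hcut2
              exact hbe ⟨h1, h2⟩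
          have hkeyS : r + c₁ + 2 ≤ n →
              (P.south r c₁ = x ∨ P.south r c₁ = y) → e2 + (n - e1) ≠ c₁ + (n - r) := by
            intro hvs hk hcuteq
            have hcut2 : c₁ + e1 = e2 + r := by omega
            rcases hk with hk | hk
            · obtain ⟨h1, h2, h3⟩ := label_unique P (c₁ + n) r c₁ true e1 e2 false (by omega)
                (by simpa using hvs) (by simp; omega)
                (by simp only [Bool.cond_false, Bool.cond_true]; rw [hk, hx]) hcut2
              exact hbe ⟨h1, h2⟩
            · obtain ⟨h1, h2, h3⟩ := label_unique P (c₁ + n) r c₁ true e1 e2 true (by omega)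
                (by simpa using hvs) (by simp; omega)
                (by simp only [Bool.cond_true]; rw [hk, hy]) hcut2
              exact hbe ⟨h1, h2⟩
          have hstep : (c₁ + 1) + (n - r) = (c₁ + (n - r)) + 1 := by omega
          by_cases hcr : P.cross r c₁ = true
          · rw [if_pos hcr, if_pos hcr, hstep, fswap_succ _ _ _ _ _ hkeyW]
            exact (ih r c₁ (by omega)).1 (by omega)
          · rw [if_neg hcr, if_neg hcr, hstep, fswap_succ _ _ _ _ _ (hkeyS (by omega))]
            exact (ih r c₁ (by omega)).2 (by omega)
    · intro hv
      rw [south_lt P _ _ hv, south_lt Q _ _ hv]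
      by_cases hbe : r + 1 = e1 ∧ c = e2
      · obtain ⟨he1, he2⟩ := hbe
        have hP1 : P.cross (r+1) c = true := by rw [he1, he2]; exact hPe
        have hQ1 : Q.cross (r+1) c = false := by rw [he1, he2]; exact hQe
        have h1 : P.south (r+1) c = y := by rw [he1, he2, hy]
        have h2 : Q.west (r+1) c = x := by rw [he1, he2, hQx]
        rw [hP1, hQ1, if_pos rfl, if_neg (by simp), h1, h2, fswap,
          if_pos ⟨Or.inr rfl, by omega⟩, if_neg (fun h => hxy h.symm)]
      · rw [hagree (r+1) c hbe]
        have hkeyW : (r+1) + c + 1 ≤ n →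
            (P.west (r+1) c = x ∨ P.west (r+1) c = y) → e2 + (n - e1) ≠ c + (n - (r+1)) := by
          intro hvs hk hcuteq
          have hcut2 : c + e1 = e2 + (r + 1) := by omega
          rcases hk with hk | hk
          · obtain ⟨h1, h2, h3⟩ := label_unique P (c + n) (r+1) c false e1 e2 false (by omega)
              (by simpa using hvs) (by simp; omega)
              (by simp only [Bool.cond_false]; rw [hk, hx]) hcut2
            exact hbe ⟨h1, h2⟩
          · obtain ⟨h1, h2, h3⟩ := label_unique P (c + n) (r+1) c false e1 e2 true (by omega)
              (by simpa using hvs) (by simp; omega)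
              (by simp only [Bool.cond_false, Bool.cond_true]; rw [hk, hy]) hcut2
            exact hbe ⟨h1, h2⟩
        have hkeyS : (r+1) + c + 2 ≤ n →
            (P.south (r+1) c = x ∨ P.south (r+1) c = y) → e2 + (n - e1) ≠ c + (n - (r+1)) := by
          intro hvs hk hcuteq
          have hcut2 : c + e1 = e2 + (r + 1) := by omega
          rcases hk with hk | hk
          · obtain ⟨h1, h2, h3⟩ := label_unique P (c + n) (r+1) c true e1 e2 false (by omega)
              (by simpa using hvs) (by simp; omega)
              (by simp only [Bool.cond_false, Bool.cond_true]; rw [hk, hx]) hcut2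
            exact hbe ⟨h1, h2⟩
          · obtain ⟨h1, h2, h3⟩ := label_unique P (c + n) (r+1) c true e1 e2 true (by omega)
              (by simpa using hvs) (by simp; omega)
              (by simp only [Bool.cond_true]; rw [hk, hy]) hcut2
            exact hbe ⟨h1, h2⟩
        have hstep : c + (n - r) = (c + (n - (r+1))) + 1 := by omega
        by_cases hcr : P.cross (r+1) c = true
        · have hsh := P.inShape _ _ hcr
          rw [if_pos hcr, if_pos hcr, hstep, fswap_succ _ _ _ _ _ (hkeyS (by omega))]
          exact (ih (r+1) c (by omega)).2 (by omega)
        · rw [if_neg hcr, if_neg hcr, hstep, fswap_succ _ _ _ _ _ (hkeyW (by omega))]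
          exact (ih (r+1) c (by omega)).1 (by omega)



end PipeDream

theorem swap_adj_lt {n : ℕ} {q q1 m1 m2 : Fin n} (hq : q.val + 1 = q1.val)
    (h : m1 < m2) (hne : ¬(m1 = q ∧ m2 = q1)) :
    Equiv.swap q q1 m1 < Equiv.swap q q1 m2 := by
  rcases eq_or_ne m1 q with rfl | h1
  · rcases eq_or_ne m2 q1 with rfl | h2
    · exact absurd ⟨rfl, rfl⟩ hne
    · have h3 : m2 ≠ m1 := fun hh => absurd (hh ▸ h) (lt_irrefl _)
      rw [Equiv.swap_apply_left, Equiv.swap_apply_of_ne_of_ne h3 h2]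
      have h4 : m2.val ≠ q1.val := fun hh => h2 (Fin.ext hh)
      rw [Fin.lt_def] at h ⊢
      omega
  · rcases eq_or_ne m1 q1 with rfl | h2
    · have h3 : m2 ≠ m1 := fun hh => absurd (hh ▸ h) (lt_irrefl _)
      have h4 : m2 ≠ q := fun hh => by
        rw [hh, Fin.lt_def] at h
        omega
      rw [Equiv.swap_apply_right, Equiv.swap_apply_of_ne_of_ne h4 h3]
      rw [Fin.lt_def] at h ⊢
      omega
    · rw [Equiv.swap_apply_of_ne_of_ne h1 h2]
      rcases eq_or_ne m2 q with rfl | h3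
      · rw [Equiv.swap_apply_left]
        rw [Fin.lt_def] at h ⊢
        omega
      · rcases eq_or_ne m2 q1 with rfl | h4
        · rw [Equiv.swap_apply_right]
          have h5 : m1.val ≠ q.val := fun hh => h1 (Fin.ext hh)
          rw [Fin.lt_def] at h ⊢
          omega
        · rw [Equiv.swap_apply_of_ne_of_ne h3 h4]
          exact h


/-- The weak order on permutations of `Fin n` : `π ≤ σ` if and only if
`Inv(π) ⊆ Inv(σ)`, where `Inv(π)` is the set of pairs `(i, j)` with `i < j` and
`π⁻¹ i > π⁻¹ j`. -/
def WeakLE {n : ℕ} (π σ : Equiv.Perm (Fin n)) : Prop :=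
  ∀ i j : Fin n, i < j → π⁻¹ j < π⁻¹ i → σ⁻¹ j < σ⁻¹ i

/-- Let `π = U j i V` cover `π' = U i j V` in the weak order
(`i < j`, and `π`, `π'` differ by exchanging the adjacent entries `j, i` of their
one-line notations, at positions `p` and `p + 1`), and suppose `π` is a linear
extension of an acyclic reduced pipe dream `P ∈ Π(ω)`.  Then: if the contact graph
`P♯` has no arc `j → i`, then `π'` is also a linear extension of `P`; otherwise,
`π'` is a linear extension of the pipe dream `P'` obtained from `P` by flipping the
furthest-northeast contact between pipes `i` and `j` in `P`. -/
theorem linExt_of_cover (n : ℕ) (ω : Equiv.Perm (Fin n)) (P : PipeDream n)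
    (hred : P.Reduced) (hexit : P.HasExitPerm ω) (hacyclic : P.Acyclic)
    (π π' : Equiv.Perm (Fin n)) (i j : Fin n) (hij : i < j)
    (p : ℕ) (hp : p + 1 < n)
    (hπp : π ⟨p, Nat.lt_of_succ_lt hp⟩ = j) (hπp1 : π ⟨p + 1, hp⟩ = i)
    (hπ' : π' = π * Equiv.swap ⟨p, Nat.lt_of_succ_lt hp⟩ ⟨p + 1, hp⟩)
    (hlin : P.LinExt π) :
    (¬ P.Arc j.val i.val → P.LinExt π') ∧
    (P.Arc j.val i.val →
      ∀ (b b' : ℕ × ℕ) (P' : PipeDream n),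
        P.ContactAt i.val j.val b →
        (∀ b₂ : ℕ × ℕ, P.ContactAt i.val j.val b₂ → b.1 ≤ b₂.1 ∧ b₂.2 ≤ b.2) →
        P.IsFlip P' b b' → P'.LinExt π') := by
  
  classical
  have hiv : i.val < j.val := hij
  have hq_lt : (⟨p, Nat.lt_of_succ_lt hp⟩ : Fin n) < ⟨p + 1, hp⟩ := by simp [Fin.lt_def]
  set q : Fin n := ⟨p, Nat.lt_of_succ_lt hp⟩ with hqdef
  set q1 : Fin n := ⟨p + 1, hp⟩ with hq1def
  have hqv : q.val = p := rfl
  have hq1v : q1.val = p + 1 := rfl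
  have hinvj : π⁻¹ j = q := by rw [← hπp]; exact Equiv.symm_apply_apply π q
  have hinvi : π⁻¹ i = q1 := by rw [← hπp1]; exact Equiv.symm_apply_apply π q1
  have hπ'inv : ∀ k : Fin n, π'⁻¹ k = Equiv.swap q q1 (π⁻¹ k) := by
    intro k
    rw [hπ', mul_inv_rev, Equiv.swap_inv]
    rfl
  have hne_q : ∀ k : Fin n, k ≠ i → k ≠ j → π⁻¹ k ≠ q ∧ π⁻¹ k ≠ q1 := by
    intro k hki hkj
    constructor
    · intro h; apply hkj; rw [← hinvj] at h; exact (Equiv.injective _) h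
    · intro h; apply hki; rw [← hinvi] at h; exact (Equiv.injective _) h
  constructor
  · intro hna a c harc
    rw [hπ'inv, hπ'inv]
    refine swap_adj_lt rfl (hlin a c harc) ?_
    rintro ⟨h1, h2⟩
    have ha : a = j := by rw [← hinvj] at h1; exact (Equiv.injective _) h1
    have hc : c = i := by rw [← hinvi] at h2; exact (Equiv.injective _) h2
    rw [ha, hc] at harc
    exact hna harc
  · intro hArc b b' P' hcont hmin hflip
    obtain ⟨hbsh, hbelb, hbor⟩ := hcont
    obtain ⟨hbb', hbelb2, hb'cr, hP'b, hP'b', hagree, hmatch⟩ := hflip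
    have hnij : ¬ P.Arc i.val j.val := by
      intro h
      have hh := hlin i j h
      rw [hinvi, hinvj] at hh
      rw [Fin.lt_def] at hh; omega
    have horient : ∀ t : ℕ × ℕ, P.ContactAt i.val j.val t →
        P.west t.1 t.2 = j.val ∧ P.south t.1 t.2 = i.val := by
      rintro t ⟨h1, h2, h3 | h3⟩
      · exact absurd ⟨t.1, t.2, h1, h2, h3.1, h3.2⟩ hnij
      · exact h3
    have hbcont : P.ContactAt i.val j.val b := ⟨hbsh, hbelb, hbor⟩
    have hwb : P.west b.1 b.2 = j.val := (horient b hbcont).1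
    have hsb : P.south b.1 b.2 = i.val := (horient b hbcont).2
    have hb'sh : b'.1 + b'.2 + 2 ≤ n := P.inShape _ _ hb'cr
    -- orientation at the crossing b'
    have hb'or : P.west b'.1 b'.2 = i.val ∧ P.south b'.1 b'.2 = j.val := by
      rcases hmatch with ⟨h1, h2⟩ | ⟨h1, h2⟩
      · exfalso
        have hwj : P.west b'.1 b'.2 = j.val := by rw [← h1, hwb]
        have hsi : P.south b'.1 b'.2 = i.val := by rw [← h2, hsb]
        obtain ⟨u, v, hcu, hlab, hlt⟩ := PipeDream.inversion_crossing P hiv (b'.2 + n)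
          b'.1 b'.2 true b'.1 b'.2 false (by omega) (by simpa using hb'sh) (by simp; omega)
          (by simpa using hsi) (by simpa using hwj) (by omega) (by simp)
        have hne' : (u, v) ≠ (b'.1, b'.2) := by
          simp only [ne_eq, Prod.mk.injEq]
          rintro ⟨rfl, rfl⟩; omega
        refine hred u v b'.1 b'.2 hcu hb'cr hne' ?_
        rcases hlab with ⟨g1, g2⟩ | ⟨g1, g2⟩
        · exact Or.inr ⟨by rw [g1, hsi], by rw [g2, hwj]⟩
        · exact Or.inl ⟨by rw [g1, hwj], by rw [g2, hsi]⟩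
      · exact ⟨by rw [← h2, hsb], by rw [← h1, hwb]⟩
    -- all contacts lie strictly after the crossing
    have hcutall : ∀ t : ℕ × ℕ, P.ContactAt i.val j.val t →
        b'.2 + (n - b'.1) < t.2 + (n - t.1) := by
      intro t ht
      have ht1 := ht.1
      obtain ⟨hwt, hst⟩ := horient t ht
      obtain ⟨u, v, hcu, hlab, hlt⟩ := PipeDream.inversion_crossing P hiv (t.2 + n)
        t.1 t.2 true t.1 t.2 false (by omega) (by simpa using ht1) (by simp; omega)
        (by simpa using hst) (by simpa using hwt) (by omega) (by simp)
      by_cases huv : u = b'.1 ∧ v = b'.2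
      · obtain ⟨rfl, rfl⟩ := huv; exact hlt
      · exfalso
        have hne' : (u, v) ≠ (b'.1, b'.2) := by
          simp only [ne_eq, Prod.mk.injEq]; exact huv
        refine hred u v b'.1 b'.2 hcu hb'cr hne' ?_
        rcases hlab with ⟨g1, g2⟩ | ⟨g1, g2⟩
        · exact Or.inl ⟨by rw [g1, hb'or.1], by rw [g2, hb'or.2]⟩
        · exact Or.inr ⟨by rw [g1, hb'or.2], by rw [g2, hb'or.1]⟩
    have hκ : b'.2 + (n - b'.1) < b.2 + (n - b.1) := hcutall b hbcont
    -- the intermediate pipe dream Q : P with the crossing at b' turned into an elbow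
    let Q : PipeDream n := ⟨fun r c => if r = b'.1 ∧ c = b'.2 then false else P.cross r c,
      fun r c h => by
        by_cases hc : r = b'.1 ∧ c = b'.2
        · rw [if_pos hc] at h; exact absurd h (by simp)
        · rw [if_neg hc] at h; exact P.inShape r c h⟩
    have hQcross : ∀ r c : ℕ, Q.cross r c = if r = b'.1 ∧ c = b'.2 then false else P.cross r c :=
      fun r c => rfl
    have hQP : ∀ r c : ℕ, ¬(r = b'.1 ∧ c = b'.2) → Q.cross r c = P.cross r c := by
      intro r c h; rw [hQcross, if_neg h]
    have hQb' : Q.cross b'.1 b'.2 = false := by rw [hQcross, if_pos ⟨rfl, rfl⟩]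
    have hsw1 := PipeDream.swap_lemma P Q b'.1 b'.2 i.val j.val hb'cr hQb' hQP
      hb'or.1 hb'or.2 (by omega)
    have hQP' : ∀ r c : ℕ, ¬(r = b.1 ∧ c = b.2) → Q.cross r c = P'.cross r c := by
      intro r c h
      by_cases hc : r = b'.1 ∧ c = b'.2
      · obtain ⟨rfl, rfl⟩ := hc
        rw [hQb', hP'b']
      · rw [hQP r c hc]
        exact hagree r c (fun heq => h (Prod.ext_iff.1 heq))
          (fun heq => hc (Prod.ext_iff.1 heq))
    have hP'Q : P'.pipes b.1 b.2 = Q.pipes b.1 b.2 := by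
      apply PipeDream.pipes_congr P' Q (b.2 + n) b.1 b.2 (by omega)
      intro r' c' h1 h2 h3
      exact (hQP' r' c' h3).symm
    have hWQ : P'.west b.1 b.2 = Q.west b.1 b.2 := congrArg Prod.fst hP'Q
    have hSQ : P'.south b.1 b.2 = Q.south b.1 b.2 := congrArg Prod.snd hP'Q
    have hP'wb : P'.west b.1 b.2 = i.val := by
      rw [hWQ, (hsw1 (b.2 + n) b.1 b.2 (by omega)).1 (by omega), hwb]
      exact PipeDream.fswap_second i.val j.val (b'.2 + (n - b'.1)) j.val (b.2 + (n - b.1)) rfl (by omega) hκ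
    have hP'sb : P'.south b.1 b.2 = j.val := by
      rw [hSQ, (hsw1 (b.2 + n) b.1 b.2 (by omega)).2 (by omega), hsb]
      exact PipeDream.fswap_first i.val j.val (b'.2 + (n - b'.1)) i.val (b.2 + (n - b.1)) rfl (by omega) hκ
    have hQb : Q.cross b.1 b.2 = false := by
      rw [hQP b.1 b.2 (fun h => hbb' (Prod.ext h.1 h.2)), hbelb2]
    have hsw2 := PipeDream.swap_lemma P' Q b.1 b.2 i.val j.val hP'b hQb hQP'
      hP'wb hP'sb (by omega)
    -- combined label formula for P'
    have hwest : ∀ r c : ℕ, r + c + 1 ≤ n → P'.west r c =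
        PipeDream.fswap i.val j.val (b.2 + (n - b.1))
          (PipeDream.fswap i.val j.val (b'.2 + (n - b'.1)) (P.west r c) (c + (n - r)))
          (c + (n - r)) := by
      intro r c hv
      have h2 := (hsw2 (c + n) r c (by omega)).1 hv
      have h1 := (hsw1 (c + n) r c (by omega)).1 hv
      rw [← PipeDream.fswap_invol i.val j.val (b.2 + (n - b.1)) (P'.west r c) (c + (n - r)),
        ← h2, h1]
    have hsouth : ∀ r c : ℕ, r + c + 2 ≤ n → P'.south r c =
        PipeDream.fswap i.val j.val (b.2 + (n - b.1))
          (PipeDream.fswap i.val j.val (b'.2 + (n - b'.1)) (P.south r c) (c + (n - r)))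
          (c + (n - r)) := by
      intro r c hv
      have h2 := (hsw2 (c + n) r c (by omega)).2 hv
      have h1 := (hsw1 (c + n) r c (by omega)).2 hv
      rw [← PipeDream.fswap_invol i.val j.val (b.2 + (n - b.1)) (P'.south r c) (c + (n - r)),
        ← h2, h1]
    -- final verification
    intro a c harc
    obtain ⟨tr, tc, hts, htf, hta, htc⟩ := harc
    rw [hπ'inv, hπ'inv]
    have hta' : PipeDream.fswap i.val j.val (b.2 + (n - b.1))
        (PipeDream.fswap i.val j.val (b'.2 + (n - b'.1)) (P.west tr tc) (tc + (n - tr)))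
        (tc + (n - tr)) = a.val := by rw [← hwest tr tc (by omega)]; exact hta
    have htc' : PipeDream.fswap i.val j.val (b.2 + (n - b.1))
        (PipeDream.fswap i.val j.val (b'.2 + (n - b'.1)) (P.south tr tc) (tc + (n - tr)))
        (tc + (n - tr)) = c.val := by rw [← hsouth tr tc hts]; exact htc
    by_cases hPt : P.cross tr tc = true
    · -- the box must be b'
      have htb' : tr = b'.1 ∧ tc = b'.2 := by
        by_cases h1 : tr = b.1 ∧ tc = b.2
        · exfalso
          obtain ⟨rfl, rfl⟩ := h1
          rw [htf] at hP'b
          exact absurd hP'b (by simp)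
        · by_contra h2
          have hag := hagree tr tc (fun heq => h1 (Prod.ext_iff.1 heq))
            (fun heq => h2 (Prod.ext_iff.1 heq))
          rw [hPt, htf] at hag
          exact absurd hag (by simp)
      obtain ⟨rfl, rfl⟩ := htb'
      rw [hb'or.1] at hta'
      rw [hb'or.2] at htc'
      have hai : a.val = i.val := by
        rw [PipeDream.fswap_stay i.val j.val (b'.2 + (n - b'.1)) i.val (b'.2 + (n - b'.1)) (by omega),
          PipeDream.fswap_stay i.val j.val (b.2 + (n - b.1)) i.val (b'.2 + (n - b'.1)) (by omega)] at hta'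
        exact hta'.symm
      have hcj : c.val = j.val := by
        rw [PipeDream.fswap_stay i.val j.val (b'.2 + (n - b'.1)) j.val (b'.2 + (n - b'.1)) (by omega),
          PipeDream.fswap_stay i.val j.val (b.2 + (n - b.1)) j.val (b'.2 + (n - b'.1)) (by omega)] at htc'
        exact htc'.symm
      rw [Fin.ext hai, Fin.ext hcj, hinvi, hinvj, Equiv.swap_apply_right,
        Equiv.swap_apply_left]
      exact hq_lt
    · have harcP : ∀ ⦃w s : ℕ⦄, P.west tr tc = w → P.south tr tc = s → P.Arc w s :=
        fun w s hw hs => ⟨tr, tc, hts, by simpa using hPt, hw, hs⟩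
      by_cases hwm : P.west tr tc = i.val ∨ P.west tr tc = j.val
      · by_cases hsm : P.south tr tc = i.val ∨ P.south tr tc = j.val
        · -- both pipes at the box are i and j : it is a contact, with labels (j, i)
          have hne2 : P.west tr tc ≠ P.south tr tc := by
            intro h
            exact hacyclic (P.west tr tc) (Relation.TransGen.single (harcP rfl h.symm))
          have hcase : P.west tr tc = j.val ∧ P.south tr tc = i.val := by
            rcases hwm with h1 | h1 <;> rcases hsm with h2 | h2
            · exact absurd (h1.trans h2.symm) hne2
            · exact absurd (harcP h1 h2) hnij
            · exact ⟨h1, h2⟩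
            · exact absurd (h1.trans h2.symm) hne2
          have hct : P.ContactAt i.val j.val (tr, tc) :=
            ⟨hts, by simpa using hPt, Or.inr ⟨hcase.1, hcase.2⟩⟩
          have hd1 : b'.2 + (n - b'.1) < tc + (n - tr) := hcutall (tr, tc) hct
          have hd2 : tc + (n - tr) ≤ b.2 + (n - b.1) := by
            have := hmin (tr, tc) hct
            omega
          rw [hcase.1] at hta'
          rw [hcase.2] at htc'
          have hai : a.val = i.val := by
            rw [PipeDream.fswap_second i.val j.val (b'.2 + (n - b'.1)) j.val (tc + (n - tr)) rfl (by omega) hd1,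
              PipeDream.fswap_stay i.val j.val (b.2 + (n - b.1)) i.val (tc + (n - tr)) (by omega)] at hta'
            exact hta'.symm
          have hcj : c.val = j.val := by
            rw [PipeDream.fswap_first i.val j.val (b'.2 + (n - b'.1)) i.val (tc + (n - tr)) rfl (by omega) hd1,
              PipeDream.fswap_stay i.val j.val (b.2 + (n - b.1)) j.val (tc + (n - tr)) (by omega)] at htc'
            exact htc'.symm
          rw [Fin.ext hai, Fin.ext hcj, hinvi, hinvj, Equiv.swap_apply_right,
            Equiv.swap_apply_left]
          exact hq_lt
        · -- west pipe is i or j, south pipe is neither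
          have hcval : c.val = P.south tr tc := by
            rw [PipeDream.fswap_out i.val j.val (b'.2 + (n - b'.1)) (P.south tr tc) (tc + (n - tr))
                (fun h => hsm (Or.inl h)) (fun h => hsm (Or.inr h)),
              PipeDream.fswap_out i.val j.val (b.2 + (n - b.1)) (P.south tr tc) (tc + (n - tr))
                (fun h => hsm (Or.inl h)) (fun h => hsm (Or.inr h))] at htc'
            exact htc'.symm
          have hc_not_i : c ≠ i := fun h => hsm (Or.inl (by rw [← hcval, h]))
          have hc_not_j : c ≠ j := fun h => hsm (Or.inr (by rw [← hcval, h]))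
          have hπc := hne_q c hc_not_i hc_not_j
          have haij : a = i ∨ a = j := by
            have hmem : a.val = i.val ∨ a.val = j.val := by
              rw [← hta']
              exact PipeDream.fswap_mem i.val j.val (b.2 + (n - b.1)) _ (tc + (n - tr))
                (PipeDream.fswap_mem i.val j.val (b'.2 + (n - b'.1)) _ (tc + (n - tr)) hwm)
            rcases hmem with h | h
            · exact Or.inl (Fin.ext h)
            · exact Or.inr (Fin.ext h)
          have hcv : p + 1 < (π⁻¹ c).val := by
            have hcne1 : (π⁻¹ c).val ≠ p := fun h => hπc.1 (Fin.ext h)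
            have hcne2 : (π⁻¹ c).val ≠ p + 1 := fun h => hπc.2 (Fin.ext h)
            rcases hwm with h1 | h1
            · have hh := hlin i c (harcP h1 hcval.symm)
              rw [hinvi] at hh
              rw [Fin.lt_def] at hh
              omega
            · have hh := hlin j c (harcP h1 hcval.symm)
              rw [hinvj] at hh
              rw [Fin.lt_def] at hh
              omega
          rw [Equiv.swap_apply_of_ne_of_ne hπc.1 hπc.2]
          rcases haij with rfl | rfl
          · rw [hinvi, Equiv.swap_apply_right]
            rw [Fin.lt_def]
            omega
          · rw [hinvj, Equiv.swap_apply_left]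
            rw [Fin.lt_def]
            omega
      · -- west pipe is neither i nor j
        have haval : a.val = P.west tr tc := by
          rw [PipeDream.fswap_out i.val j.val (b'.2 + (n - b'.1)) (P.west tr tc) (tc + (n - tr))
              (fun h => hwm (Or.inl h)) (fun h => hwm (Or.inr h)),
            PipeDream.fswap_out i.val j.val (b.2 + (n - b.1)) (P.west tr tc) (tc + (n - tr))
              (fun h => hwm (Or.inl h)) (fun h => hwm (Or.inr h))] at hta'
          exact hta'.symm
        have ha_not_i : a ≠ i := fun h => hwm (Or.inl (by rw [← haval, h]))
        have ha_not_j : a ≠ j := fun h => hwm (Or.inr (by rw [← haval, h]))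
        have hπa := hne_q a ha_not_i ha_not_j
        rw [Equiv.swap_apply_of_ne_of_ne hπa.1 hπa.2]
        have hane1 : (π⁻¹ a).val ≠ p := fun h => hπa.1 (Fin.ext h)
        have hane2 : (π⁻¹ a).val ≠ p + 1 := fun h => hπa.2 (Fin.ext h)
        by_cases hsm : P.south tr tc = i.val ∨ P.south tr tc = j.val
        · have hcij : c = i ∨ c = j := by
            have hmem : c.val = i.val ∨ c.val = j.val := by
              rw [← htc']
              exact PipeDream.fswap_mem i.val j.val (b.2 + (n - b.1)) _ (tc + (n - tr))
                (PipeDream.fswap_mem i.val j.val (b'.2 + (n - b'.1)) _ (tc + (n - tr)) hsm)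
            rcases hmem with h | h
            · exact Or.inl (Fin.ext h)
            · exact Or.inr (Fin.ext h)
          have hav : (π⁻¹ a).val < p := by
            rcases hsm with h2 | h2
            · have hh := hlin a i (harcP haval.symm h2)
              rw [hinvi] at hh
              rw [Fin.lt_def] at hh
              omega
            · have hh := hlin a j (harcP haval.symm h2)
              rw [hinvj] at hh
              rw [Fin.lt_def] at hh
              omega
          rcases hcij with rfl | rfl
          · rw [hinvi, Equiv.swap_apply_right]
            rw [Fin.lt_def]
            omega
          · rw [hinvj, Equiv.swap_apply_left]
            rw [Fin.lt_def]
            omega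
        · have hcval : c.val = P.south tr tc := by
            rw [PipeDream.fswap_out i.val j.val (b'.2 + (n - b'.1)) (P.south tr tc) (tc + (n - tr))
                (fun h => hsm (Or.inl h)) (fun h => hsm (Or.inr h)),
              PipeDream.fswap_out i.val j.val (b.2 + (n - b.1)) (P.south tr tc) (tc + (n - tr))
                (fun h => hsm (Or.inl h)) (fun h => hsm (Or.inr h))] at htc'
            exact htc'.symm
          have hc_not_i : c ≠ i := fun h => hsm (Or.inl (by rw [← hcval, h]))
          have hc_not_j : c ≠ j := fun h => hsm (Or.inr (by rw [← hcval, h]))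
          have hπc := hne_q c hc_not_i hc_not_j
          rw [Equiv.swap_apply_of_ne_of_ne hπc.1 hπc.2]
          exact hlin a c (harcP haval.symm hcval.symm)
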